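/- arXiv:1306.2171 — 4 statements merged into one kernel-verified Lean document; each statement's English description precedes it below -/
import Mathlib

section
/- Let G be a finite simple graph, let k ≥ 1 be a natural number, and let v be a vertex of G with deg_G(v) > k. Then the map S ↦ S \ {v} is a bijection from the set of vertex covers of G of size at most k onto the set of vertex covers of G − v of size at most k − 1 (where G − v is the induced subgraph of G on V \ {v}), with inverse T ↦ T ∪ {v}. -/
/-- `S` is a vertex cover of `G`: every edge of `G` has at least one endpoint in `S`. -/
def IsVertexCover {V : Type*} (G : SimpleGraph V) (S : Finset V) : Prop :=
  ∀ ⦃u w : V⦄, G.Adj u w → u ∈ S ∨ w ∈ S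

/-- `T` is a vertex cover of `G − v` (the induced subgraph of `G` on `V \ {v}`):
`T` is a set of vertices of `G − v` (i.e. avoids `v`) covering every edge of `G`
not incident to `v`. -/
def IsVertexCoverMinus {V : Type*} (G : SimpleGraph V) (v : V) (T : Finset V) : Prop :=
  v ∉ T ∧ ∀ ⦃u w : V⦄, G.Adj u w → u ≠ v → w ≠ v → u ∈ T ∨ w ∈ T

/-- If `deg_G(v) > k ≥ 1`, then `S ↦ S \ {v}` is a bijection from the vertex covers of `G` of
size at most `k` onto the vertex covers of `G − v` of size at most `k − 1`, with inverse
`T ↦ T ∪ {v}`. -/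
theorem vertexCover_erase_bijection {V : Type*} [Fintype V] [DecidableEq V]
    (G : SimpleGraph V) [DecidableRel G.Adj] (k : ℕ) (hk : 1 ≤ k) (v : V)
    (hdeg : k < G.degree v) :
    (∀ S : Finset V, IsVertexCover G S → S.card ≤ k →
      IsVertexCoverMinus G v (S.erase v) ∧ (S.erase v).card ≤ k - 1 ∧
        insert v (S.erase v) = S) ∧
    (∀ T : Finset V, IsVertexCoverMinus G v T → T.card ≤ k - 1 →
      IsVertexCover G (insert v T) ∧ (insert v T).card ≤ k ∧
        (insert v T).erase v = T) := by
  constructor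
  · intro S hS hcard
    have hv : v ∈ S := by
      by_contra hv
      have hsub : G.neighborFinset v ⊆ S := by
        intro u hu
        rw [SimpleGraph.mem_neighborFinset] at hu
        rcases hS hu.symm with h | h
        · exact h
        · exact absurd h hv
      have := Finset.card_le_card hsub
      rw [SimpleGraph.card_neighborFinset_eq_degree] at this
      omega
    refine ⟨⟨Finset.notMem_erase v S, ?_⟩, ?_, Finset.insert_erase hv⟩
    · intro u w huw hu hw
      rcases hS huw with h | h
      · exact Or.inl (Finset.mem_erase.2 ⟨hu, h⟩)
      · exact Or.inr (Finset.mem_erase.2 ⟨hw, h⟩)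
    · have := Finset.card_erase_of_mem hv
      omega
  · intro T hT hcard
    refine ⟨?_, ?_, ?_⟩
    · intro u w huw
      by_cases hu : u = v
      · exact Or.inl (hu ▸ Finset.mem_insert_self v T)
      by_cases hw : w = v
      · exact Or.inr (hw ▸ Finset.mem_insert_self v T)
      rcases hT.2 huw hu hw with h | h
      · exact Or.inl (Finset.mem_insert_of_mem h)
      · exact Or.inr (Finset.mem_insert_of_mem h)
    · have := Finset.card_insert_of_notMem hT.1
      omega
    · exact Finset.erase_insert hT.1
end

section
/- Let G be a finite simple graph with vertex set V and let k be a natural number. Let D ⊆ V be a set such that every vertex cover of G of size at most k contains D. Let I = {v ∈ V \ D : every neighbor of v in G lies in D}, and let H be the induced subgraph of G on V \ (D ∪ I). For each vertex cover W of H, define the family F_W = {W ∪ D ∪ V' : V' ⊆ I and |W ∪ D ∪ V'| ≤ k}. Then: (a) for distinct vertex covers W₁ ≠ W₂ of H, the families F_{W₁} and F_{W₂} are disjoint; and (b) the union of the families F_W over all vertex covers W of H equals the set of all vertex covers of G of size at most k. -/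
/-- `S` is a vertex cover of `G` (as a set of vertices). -/
def IsVertexCoverSet {V : Type*} (G : SimpleGraph V) (S : Set V) : Prop :=
  ∀ ⦃u w : V⦄, G.Adj u w → u ∈ S ∨ w ∈ S

/-- `W` is a vertex cover of the induced subgraph `G[A]`: `W ⊆ A` and `W` covers every edge of
`G` with both endpoints in `A`. -/
def IsVertexCoverInduced {V : Type*} (G : SimpleGraph V) (A : Set V) (W : Set V) : Prop :=
  W ⊆ A ∧ ∀ ⦃u w : V⦄, G.Adj u w → u ∈ A → w ∈ A → u ∈ W ∨ w ∈ W

/-- Buss-kernelization correctness: if every vertex cover of `G` of size `≤ k` contains `D`,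
`I` is the set of vertices outside `D` all of whose neighbours lie in `D`, and `H` is the
induced subgraph on the complement of `D ∪ I`, then the families
`F_W = {W ∪ D ∪ V' : V' ⊆ I, |W ∪ D ∪ V'| ≤ k}` (for `W` a vertex cover of `H`) are pairwise
disjoint and their union is exactly the set of vertex covers of `G` of size `≤ k`. -/
theorem buss_families_partition {V : Type*} [Fintype V] (G : SimpleGraph V) (k : ℕ)
    (D : Set V) (hD : ∀ S : Set V, IsVertexCoverSet G S → S.ncard ≤ k → D ⊆ S) :
    let I : Set V := {v | v ∉ D ∧ ∀ w : V, G.Adj v w → w ∈ D}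
    let A : Set V := (D ∪ I)ᶜ
    let F : Set V → Set (Set V) :=
      fun W => {X | ∃ V' ⊆ I, X = W ∪ D ∪ V' ∧ X.ncard ≤ k}
    (∀ W₁ W₂ : Set V, IsVertexCoverInduced G A W₁ → IsVertexCoverInduced G A W₂ →
      W₁ ≠ W₂ → F W₁ ∩ F W₂ = ∅) ∧
    (⋃ W ∈ {W : Set V | IsVertexCoverInduced G A W}, F W) =
      {S : Set V | IsVertexCoverSet G S ∧ S.ncard ≤ k} := by
  intro I A F
  have key : ∀ (W Vp : Set V), W ⊆ A → Vp ⊆ I → (W ∪ D ∪ Vp) ∩ A = W := by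
    intro W Vp hW hVp
    ext v
    simp only [Set.mem_inter_iff, Set.mem_union, Set.mem_compl_iff, A]
    constructor
    · rintro ⟨(hv | hv) | hv, hvA⟩
      · exact hv
      · exact absurd (Or.inl hv) hvA
      · exact absurd (Or.inr (hVp hv)) hvA
    · intro hv
      exact ⟨Or.inl (Or.inl hv), hW hv⟩
  constructor
  · intro W₁ W₂ h₁ h₂ hne
    ext X
    simp only [Set.mem_inter_iff, Set.mem_empty_iff_false, iff_false, not_and]
    rintro ⟨V₁, hV₁, rfl, -⟩ ⟨V₂, hV₂, hX2, -⟩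
    apply hne
    calc W₁ = (W₁ ∪ D ∪ V₁) ∩ A := (key _ _ h₁.1 hV₁).symm
      _ = (W₂ ∪ D ∪ V₂) ∩ A := by rw [hX2]
      _ = W₂ := key _ _ h₂.1 hV₂
  · ext S
    simp only [Set.mem_iUnion, Set.mem_setOf_eq]
    constructor
    · rintro ⟨W, hW, V', hV', rfl, hk⟩
      refine ⟨?_, hk⟩
      intro u w huw
      by_cases hu : u ∈ D
      · exact Or.inl (Or.inl (Or.inr hu))
      by_cases hw : w ∈ D
      · exact Or.inr (Or.inl (Or.inr hw))
      have huA : u ∈ A := by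
        simp only [Set.mem_compl_iff, Set.mem_union, Set.mem_setOf_eq, A, I]
        rintro (h | ⟨-, h⟩)
        · exact hu h
        · exact hw (h w huw)
      have hwA : w ∈ A := by
        simp only [Set.mem_compl_iff, Set.mem_union, Set.mem_setOf_eq, A, I]
        rintro (h | ⟨-, h⟩)
        · exact hw h
        · exact hu (h u huw.symm)
      rcases hW.2 huw huA hwA with h | h
      · exact Or.inl (Or.inl (Or.inl h))
      · exact Or.inr (Or.inl (Or.inl h))
    · rintro ⟨hS, hk⟩
      have hDS : D ⊆ S := hD S hS hk
      refine ⟨S ∩ A, ⟨Set.inter_subset_right, ?_⟩, S ∩ I, Set.inter_subset_right, ?_, hk⟩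
      · intro u w huw huA hwA
        rcases hS huw with h | h
        · exact Or.inl ⟨h, huA⟩
        · exact Or.inr ⟨h, hwA⟩
      · ext v
        simp only [Set.mem_union, Set.mem_inter_iff, Set.mem_compl_iff, A]
        constructor
        · intro hv
          by_cases hvD : v ∈ D
          · exact Or.inl (Or.inr hvD)
          by_cases hvI : v ∈ I
          · exact Or.inr ⟨hv, hvI⟩
          · exact Or.inl (Or.inl ⟨hv, fun h => (h.elim hvD hvI)⟩)
        · rintro ((⟨hv, -⟩ | hv) | ⟨hv, -⟩)
          · exact hv
          · exact hDS hv
          · exact hv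
end

section
/- Fix a finite simple graph G on a finite vertex type V. Consider the following reduction relation on pairs (s, k), where s is a finite set of vertices and k a natural number: (Rule 1) if v ∈ s and the degree of v in the induced subgraph G[s] is greater than k, then (s, k) reduces to (s \ {v}, k − 1); (Rule 2) if v ∈ s and v is isolated in G[s], then (s, k) reduces to (s \ {v}, k). Then this reduction relation has unique normal forms: for every pair (s, k), any two irreducible pairs reachable from (s, k) by finite sequences of reduction steps are equal. -/
set_option linter.unusedSectionVars false

section Aux

variable {V : Type*} [Fintype V] [DecidableEq V] (G : SimpleGraph V) [DecidableRel G.Adj]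

/-- The Buss reduction relation. -/
def BussRed : Finset V × ℕ → Finset V × ℕ → Prop := fun p q =>
  (∃ v ∈ p.1, p.2 < ((p.1).filter (fun w => G.Adj v w)).card ∧ q = (p.1.erase v, p.2 - 1)) ∨
  (∃ v ∈ p.1, ((p.1).filter (fun w => G.Adj v w)).card = 0 ∧ q = (p.1.erase v, p.2))

variable {G}

lemma deg_erase_le (v w : V) (s : Finset V) :
    (((s.erase v)).filter (fun x => G.Adj w x)).card ≤ (s.filter (fun x => G.Adj w x)).card := by
  rw [Finset.filter_erase]
  exact Finset.card_erase_le

lemma deg_le_deg_erase_add_one (v w : V) (s : Finset V) :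
    (s.filter (fun x => G.Adj w x)).card ≤ (((s.erase v)).filter (fun x => G.Adj w x)).card + 1 := by
  rw [Finset.filter_erase]
  have := Finset.pred_card_le_card_erase (s := s.filter (fun x => G.Adj w x)) (a := v)
  omega

lemma deg_erase_of_not_adj {v w : V} (s : Finset V) (h : ¬ G.Adj w v) :
    (((s.erase v)).filter (fun x => G.Adj w x)).card = (s.filter (fun x => G.Adj w x)).card := by
  rw [Finset.filter_erase, Finset.erase_eq_of_notMem]
  simp [h]

lemma not_adj_of_isolated {v w : V} {s : Finset V}
    (h : (s.filter (fun x => G.Adj w x)).card = 0) (hv : v ∈ s) : ¬ G.Adj w v := by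
  intro hadj
  rw [Finset.card_eq_zero] at h
  have : v ∈ s.filter (fun x => G.Adj w x) := Finset.mem_filter.2 ⟨hv, hadj⟩
  simp [h] at this

lemma buss_diamond :
    ∀ a b c, BussRed G a b → BussRed G a c →
      ∃ d, Relation.ReflGen (BussRed G) b d ∧ Relation.ReflTransGen (BussRed G) c d := by
  rintro ⟨s, k⟩ b c hb hc
  have triv : ∀ b : Finset V × ℕ, ∃ d, Relation.ReflGen (BussRed G) b d ∧
      Relation.ReflTransGen (BussRed G) b d := fun b => ⟨b, .refl, .refl⟩
  have pe : ∀ (A B : Finset V) (m n : ℕ), A = B → m = n → (A, m) = (B, n) := by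
    rintro A B m n rfl rfl; rfl
  obtain (⟨v, hv, hdv, rfl⟩ | ⟨v, hv, hdv, rfl⟩) := hb <;>
    obtain (⟨w, hw, hdw, rfl⟩ | ⟨w, hw, hdw, rfl⟩) := hc <;>
    dsimp only [BussRed] at hv hw hdv hdw ⊢
  · -- Rule1 / Rule1
    by_cases hvw : v = w
    · subst hvw; exact triv _
    · have hswap : (s.erase w).erase v = (s.erase v).erase w := Finset.erase_right_comm
      refine ⟨((s.erase v).erase w, k - 1 - 1), ?_, ?_⟩
      · rcases Nat.eq_zero_or_pos k with hk | hk
        · subst hk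
          by_cases h0 : (((s.erase v)).filter (fun x => G.Adj w x)).card = 0
          · exact Relation.ReflGen.single (Or.inr ⟨w, Finset.mem_erase.2 ⟨Ne.symm hvw, hw⟩, h0,
              pe _ _ _ _ rfl (by omega)⟩)
          · exact Relation.ReflGen.single (Or.inl ⟨w, Finset.mem_erase.2 ⟨Ne.symm hvw, hw⟩,
              by dsimp only; omega, rfl⟩)
        · refine Relation.ReflGen.single (Or.inl ⟨w, Finset.mem_erase.2 ⟨Ne.symm hvw, hw⟩, ?_, rfl⟩)
          have h1 := deg_le_deg_erase_add_one (G := G) v w s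
          dsimp only; omega
      · rcases Nat.eq_zero_or_pos k with hk | hk
        · subst hk
          by_cases h0 : (((s.erase w)).filter (fun x => G.Adj v x)).card = 0
          · exact Relation.ReflTransGen.single (Or.inr ⟨v, Finset.mem_erase.2 ⟨hvw, hv⟩, h0,
              pe _ _ _ _ hswap.symm (by omega)⟩)
          · exact Relation.ReflTransGen.single (Or.inl ⟨v, Finset.mem_erase.2 ⟨hvw, hv⟩,
              by dsimp only; omega, pe _ _ _ _ hswap.symm rfl⟩)
        · refine Relation.ReflTransGen.single (Or.inl ⟨v, Finset.mem_erase.2 ⟨hvw, hv⟩, ?_,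
            pe _ _ _ _ hswap.symm rfl⟩)
          have h1 := deg_le_deg_erase_add_one (G := G) w v s
          dsimp only; omega
  · -- Rule1 / Rule2
    have hvw : v ≠ w := by rintro rfl; omega
    have hswap : (s.erase w).erase v = (s.erase v).erase w := Finset.erase_right_comm
    refine ⟨((s.erase v).erase w, k - 1), ?_, ?_⟩
    · refine Relation.ReflGen.single (Or.inr ⟨w, Finset.mem_erase.2 ⟨Ne.symm hvw, hw⟩, ?_, rfl⟩)
      have := deg_erase_le (G := G) v w s
      dsimp only; omega
    · have hnadj : ¬ G.Adj v w := fun h => not_adj_of_isolated hdw hv h.symm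
      have hdeq := deg_erase_of_not_adj (v := w) (w := v) s hnadj
      exact Relation.ReflTransGen.single (Or.inl ⟨v, Finset.mem_erase.2 ⟨hvw, hv⟩, by dsimp only; omega,
        pe _ _ _ _ hswap.symm rfl⟩)
  · -- Rule2 / Rule1
    have hvw : v ≠ w := by rintro rfl; omega
    have hswap : (s.erase w).erase v = (s.erase v).erase w := Finset.erase_right_comm
    refine ⟨((s.erase v).erase w, k - 1), ?_, ?_⟩
    · have hnadj : ¬ G.Adj w v := fun h => not_adj_of_isolated hdv hw h.symm
      have hdeq := deg_erase_of_not_adj (v := v) (w := w) s hnadj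
      exact Relation.ReflGen.single (Or.inl ⟨w, Finset.mem_erase.2 ⟨Ne.symm hvw, hw⟩,
        by dsimp only; omega, rfl⟩)
    · refine Relation.ReflTransGen.single (Or.inr ⟨v, Finset.mem_erase.2 ⟨hvw, hv⟩, ?_,
        pe _ _ _ _ hswap.symm rfl⟩)
      have := deg_erase_le (G := G) w v s
      dsimp only; omega
  · -- Rule2 / Rule2
    by_cases hvw : v = w
    · subst hvw; exact triv _
    · have hswap : (s.erase w).erase v = (s.erase v).erase w := Finset.erase_right_comm
      refine ⟨((s.erase v).erase w, k), ?_, ?_⟩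
      · refine Relation.ReflGen.single (Or.inr ⟨w, Finset.mem_erase.2 ⟨Ne.symm hvw, hw⟩, ?_, rfl⟩)
        have := deg_erase_le (G := G) v w s
        dsimp only; omega
      · refine Relation.ReflTransGen.single (Or.inr ⟨v, Finset.mem_erase.2 ⟨hvw, hv⟩, ?_,
          pe _ _ _ _ hswap.symm rfl⟩)
        have := deg_erase_le (G := G) w v s
        dsimp only; omega

lemma buss_unique (p q₁ q₂ : Finset V × ℕ)
    (h1 : Relation.ReflTransGen (BussRed G) p q₁)
    (h2 : Relation.ReflTransGen (BussRed G) p q₂)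
    (n1 : ∀ r, ¬ BussRed G q₁ r) (n2 : ∀ r, ¬ BussRed G q₂ r) : q₁ = q₂ := by
  obtain ⟨d, hd1, hd2⟩ := Relation.church_rosser buss_diamond h1 h2
  have e1 : q₁ = d := by
    rcases Relation.ReflTransGen.cases_head hd1 with h | ⟨c, hc, _⟩
    · exact h
    · exact absurd hc (n1 c)
  have e2 : q₂ = d := by
    rcases Relation.ReflTransGen.cases_head hd2 with h | ⟨c, hc, _⟩
    · exact h
    · exact absurd hc (n2 c)
  rw [e1, e2]

end Aux

/-- Buss reduction rules have unique normal forms: on pairs `(s, k)`, Rule 1 removes a vertex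
`v ∈ s` whose degree in the induced subgraph `G[s]` exceeds `k` and decreases `k` by one;
Rule 2 removes a vertex `v ∈ s` isolated in `G[s]`.  Any two irreducible pairs reachable from
a given pair by finite sequences of reduction steps coincide. -/
theorem buss_reduction_unique_normal_form {V : Type*} [Fintype V] [DecidableEq V]
    (G : SimpleGraph V) [DecidableRel G.Adj] :
    let deg : V → Finset V → ℕ := fun v s => (s.filter (fun w => G.Adj v w)).card
    let Red : Finset V × ℕ → Finset V × ℕ → Prop := fun p q =>
      (∃ v ∈ p.1, p.2 < deg v p.1 ∧ q = (p.1.erase v, p.2 - 1)) ∨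
      (∃ v ∈ p.1, deg v p.1 = 0 ∧ q = (p.1.erase v, p.2))
    ∀ p q₁ q₂ : Finset V × ℕ,
      Relation.ReflTransGen Red p q₁ → Relation.ReflTransGen Red p q₂ →
      (∀ r, ¬ Red q₁ r) → (∀ r, ¬ Red q₂ r) → q₁ = q₂ := by
  intro deg Red
  exact fun p q₁ q₂ h1 h2 n1 n2 => buss_unique (G := G) p q₁ q₂ h1 h2 n1 n2
end

section
/- Let R be a 1-valid Boolean relation of arity m with tuples m₁, m₂ ∈ R such that m₁ ∨ m₂ ∉ R, and let R' be a 1-valid Boolean relation of arity m' with tuples m₁', m₂' ∈ R' such that m₁' ⊕ m₂' ⊕ 1 ∉ R'. Let M and M' be the 4-ary relations defined by M(a,b,c,d) iff the m-tuple with i-th coordinate a, b, c, d according as (m₁(i), m₂(i)) equals (0,0), (0,1), (1,0), (1,1) belongs to R, and analogously M'(a,b,c,d) from R', m₁', m₂'. Define the ternary relation Q ⊆ {0,1}³ by Q(x,y,z) := M(x,y,z,1) ∧ M'(x,y,z,1). Then Q contains the tuples (0,0,1), (0,1,0), and (1,1,1), and contains neither (0,1,1) nor (1,0,0). -/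
/-- The `m`-tuple whose `i`-th coordinate is `a`, `b`, `c`, `d` according as
`(m₁ i, m₂ i)` equals `(0,0)`, `(0,1)`, `(1,0)`, `(1,1)`. -/
def selTuple {m : ℕ} (m₁ m₂ : Fin m → Bool) (a b c d : Bool) : Fin m → Bool :=
  fun i =>
    match m₁ i, m₂ i with
    | false, false => a
    | false, true  => b
    | true,  false => c
    | true,  true  => d

lemma sel1 {m : ℕ} (m₁ m₂ : Fin m → Bool) :
    selTuple m₁ m₂ false false true true = m₁ := by
  funext i; unfold selTuple; cases h1 : m₁ i <;> cases h2 : m₂ i <;> simp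

lemma sel2 {m : ℕ} (m₁ m₂ : Fin m → Bool) :
    selTuple m₁ m₂ false true false true = m₂ := by
  funext i; unfold selTuple; cases h1 : m₁ i <;> cases h2 : m₂ i <;> simp

lemma selAll {m : ℕ} (m₁ m₂ : Fin m → Bool) :
    selTuple m₁ m₂ true true true true = fun _ => true := by
  funext i; unfold selTuple; cases h1 : m₁ i <;> cases h2 : m₂ i <;> simp

lemma selOr {m : ℕ} (m₁ m₂ : Fin m → Bool) :
    selTuple m₁ m₂ false true true true = fun i => m₁ i || m₂ i := by
  funext i; unfold selTuple; cases h1 : m₁ i <;> cases h2 : m₂ i <;> simp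

lemma selXnor {m : ℕ} (m₁ m₂ : Fin m → Bool) :
    selTuple m₁ m₂ true false false true = fun i => ((m₁ i).xor (m₂ i)).xor true := by
  funext i; unfold selTuple; cases h1 : m₁ i <;> cases h2 : m₂ i <;> simp

/-- Combining the 4-ary relations `M` (from a 1-valid `R` with `m₁, m₂ ∈ R`, `m₁ ∨ m₂ ∉ R`)
and `M'` (from a 1-valid `R'` with `m₁', m₂' ∈ R'`, `m₁' ⊕ m₂' ⊕ 1 ∉ R'`), the ternary
relation `Q(x,y,z) := M(x,y,z,1) ∧ M'(x,y,z,1)` contains `(0,0,1)`, `(0,1,0)` and `(1,1,1)`,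
and contains neither `(0,1,1)` nor `(1,0,0)`. -/
theorem ternary_relation_Q {m m' : ℕ}
    (R : Set (Fin m → Bool)) (m₁ m₂ : Fin m → Bool)
    (hR1 : (fun _ => true) ∈ R) (h₁ : m₁ ∈ R) (h₂ : m₂ ∈ R)
    (hor : (fun i => m₁ i || m₂ i) ∉ R)
    (R' : Set (Fin m' → Bool)) (m₁' m₂' : Fin m' → Bool)
    (hR'1 : (fun _ => true) ∈ R') (h₁' : m₁' ∈ R') (h₂' : m₂' ∈ R')
    (hxnor : (fun i => ((m₁' i).xor (m₂' i)).xor true) ∉ R') :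
    let M : Bool → Bool → Bool → Bool → Prop :=
      fun a b c d => selTuple m₁ m₂ a b c d ∈ R
    let M' : Bool → Bool → Bool → Bool → Prop :=
      fun a b c d => selTuple m₁' m₂' a b c d ∈ R'
    let Q : Bool → Bool → Bool → Prop := fun x y z => M x y z true ∧ M' x y z true
    Q false false true ∧ Q false true false ∧ Q true true true ∧
      ¬ Q false true true ∧ ¬ Q true false false := by
  intro M M' Q
  dsimp only [M, M', Q]
  refine ⟨⟨?_, ?_⟩, ⟨?_, ?_⟩, ⟨?_, ?_⟩, ?_, ?_⟩
  · rw [sel1]; exact h₁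
  · rw [sel1]; exact h₁'
  · rw [sel2]; exact h₂
  · rw [sel2]; exact h₂'
  · rw [selAll]; exact hR1
  · rw [selAll]; exact hR'1
  · rintro ⟨h, -⟩; rw [selOr] at h; exact hor h
  · rintro ⟨-, h⟩; rw [selXnor] at h; exact hxnor h
end
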